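/- Let d ≥ 1 and N ≥ 1. There exists a symmetric positive semidefinite d(N+1) × d(N+1) real matrix R such that for all x₀,…,x_N ∈ ℝ^d, 𝒞(x₀,…,x_N) = xᵀRx, where x ∈ ℝ^{d(N+1)} is the concatenation of x₀,…,x_N. In particular, 𝒞 is a continuous, nonnegative quadratic form on (ℝ^d)^{N+1}. -/

import Mathlib

open MeasureTheory Matrix

noncomputable section

/-- `𝒞(x₀,…,x_N)`: the infimum of `∫₀^N ‖X''‖²` over all C² curves `X` with
`X(i) = x i` for every `i = 0, …, N`. -/
def multiCost {d : ℕ} (N : ℕ) (x : Fin (N + 1) → EuclideanSpace ℝ (Fin d)) : ℝ :=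
  sInf { y : ℝ | ∃ X : ℝ → EuclideanSpace ℝ (Fin d), ContDiff ℝ 2 X ∧
      (∀ i : Fin (N + 1), X ((i : ℕ) : ℝ) = x i) ∧
      y = ∫ t in (0:ℝ)..(N:ℝ), ‖deriv (deriv X) t‖ ^ 2 }

set_option linter.unusedSectionVars false
set_option linter.unusedVariables false


namespace MCost

variable {d N : ℕ}

abbrev E (d : ℕ) := EuclideanSpace ℝ (Fin d)

/-- the admissible-values set -/
def S (N : ℕ) (x : Fin (N + 1) → E d) : Set ℝ :=
  { y : ℝ | ∃ X : ℝ → E d, ContDiff ℝ 2 X ∧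
      (∀ i : Fin (N + 1), X ((i : ℕ) : ℝ) = x i) ∧
      y = ∫ t in (0:ℝ)..(N:ℝ), ‖deriv (deriv X) t‖ ^ 2 }

def cost (N : ℕ) (X : ℝ → E d) : ℝ := ∫ t in (0:ℝ)..(N:ℝ), ‖deriv (deriv X) t‖ ^ 2

lemma cost_mem {x : Fin (N+1) → E d} {X : ℝ → E d} (hX : ContDiff ℝ 2 X)
    (hXi : ∀ i : Fin (N+1), X ((i : ℕ) : ℝ) = x i) : cost N X ∈ S N x :=
  ⟨X, hX, hXi, rfl⟩

lemma diff1 {X : ℝ → E d} (hX : ContDiff ℝ 2 X) : Differentiable ℝ X :=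
  hX.differentiable (by norm_num)

lemma cd1_deriv {X : ℝ → E d} (hX : ContDiff ℝ 2 X) : ContDiff ℝ 1 (deriv X) := by
  have h2 : (2 : WithTop ℕ∞) = 1 + 1 := by norm_num
  rw [h2, contDiff_succ_iff_deriv] at hX
  exact hX.2.2

lemma diff2 {X : ℝ → E d} (hX : ContDiff ℝ 2 X) : Differentiable ℝ (deriv X) :=
  (cd1_deriv hX).differentiable one_ne_zero

lemma cont2 {X : ℝ → E d} (hX : ContDiff ℝ 2 X) : Continuous (deriv (deriv X)) :=
  (contDiff_one_iff_deriv.1 (cd1_deriv hX)).2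

lemma deriv2_add {X Y : ℝ → E d} (hX : ContDiff ℝ 2 X) (hY : ContDiff ℝ 2 Y) (t : ℝ) :
    deriv (deriv (fun s => X s + Y s)) t = deriv (deriv X) t + deriv (deriv Y) t := by
  have h1 : deriv (fun s => X s + Y s) = fun s => deriv X s + deriv Y s := by
    funext s; exact deriv_add (diff1 hX s) (diff1 hY s)
  rw [h1]
  exact deriv_add (diff2 hX t) (diff2 hY t)

lemma deriv2_smul {X : ℝ → E d} (hX : ContDiff ℝ 2 X) (a : ℝ) (t : ℝ) :
    deriv (deriv (fun s => a • X s)) t = a • deriv (deriv X) t := by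
  have h1 : deriv (fun s => a • X s) = fun s => a • deriv X s := by
    funext s; exact deriv_const_smul a (diff1 hX s)
  rw [h1]
  exact deriv_const_smul a (diff2 hX t)

lemma intble {X : ℝ → E d} (hX : ContDiff ℝ 2 X) :
    IntervalIntegrable (fun t => ‖deriv (deriv X) t‖ ^ 2) volume 0 N :=
  (((cont2 hX).norm).pow 2).intervalIntegrable _ _

lemma cost_nonneg {X : ℝ → E d} : 0 ≤ cost N X :=
  intervalIntegral.integral_nonneg (by positivity) (fun t _ => by positivity)

lemma S_nonneg {x : Fin (N+1) → E d} : ∀ y ∈ S N x, (0:ℝ) ≤ y := by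
  rintro y ⟨X, _, _, rfl⟩; exact cost_nonneg

lemma cost_parallelogram {X Y : ℝ → E d} (hX : ContDiff ℝ 2 X) (hY : ContDiff ℝ 2 Y) :
    cost N (fun s => X s + Y s) + cost N (fun s => X s + (-1:ℝ) • Y s)
      = 2 * cost N X + 2 * cost N Y := by
  have hY' : ContDiff ℝ 2 (fun s => (-1:ℝ) • Y s) := hY.const_smul _
  have e1 : ∀ t : ℝ, ‖deriv (deriv (fun s => X s + Y s)) t‖ ^ 2
      = ‖deriv (deriv X) t + deriv (deriv Y) t‖ ^ 2 := fun t => by rw [deriv2_add hX hY t]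
  have e2 : ∀ t : ℝ, ‖deriv (deriv (fun s => X s + (-1:ℝ) • Y s)) t‖ ^ 2
      = ‖deriv (deriv X) t - deriv (deriv Y) t‖ ^ 2 := fun t => by
    rw [deriv2_add hX hY' t, deriv2_smul hY (-1) t]
    simp [sub_eq_add_neg]
  unfold cost
  simp only [e1, e2]
  rw [← intervalIntegral.integral_add, ← intervalIntegral.integral_const_mul,
    ← intervalIntegral.integral_const_mul, ← intervalIntegral.integral_add]
  · apply intervalIntegral.integral_congr
    intro t _
    have := parallelogram_law_with_norm ℝ (deriv (deriv X) t) (deriv (deriv Y) t)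
    simp only [pow_two]
    ring_nf
    ring_nf at this
    linarith
  · exact ((intble hX).const_mul 2)
  · exact ((intble hY).const_mul 2)
  · exact ((((cont2 hX).add (cont2 hY)).norm).pow 2).intervalIntegrable _ _
  · exact ((((cont2 hX).sub (cont2 hY)).norm).pow 2).intervalIntegrable _ _

lemma cost_smul {X : ℝ → E d} (hX : ContDiff ℝ 2 X) (a : ℝ) :
    cost N (fun s => a • X s) = a ^ 2 * cost N X := by
  unfold cost
  rw [← intervalIntegral.integral_const_mul]
  apply intervalIntegral.integral_congr
  intro t _
  simp only []
  rw [deriv2_smul hX a t, norm_smul]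
  simp [mul_pow, sq_abs]

def bump : ContDiffBump (0:ℝ) := ⟨1/4, 1/2, by norm_num, by norm_num⟩

lemma bump_self : bump (0:ℝ) = 1 :=
  bump.one_of_mem_closedBall (by simp [bump, Metric.mem_closedBall])

lemma bump_ne {i j : ℕ} (h : i ≠ j) : bump ((j:ℝ) - (i:ℝ)) = 0 := by
  apply bump.zero_of_le_dist
  have h1 : (1:ℝ) ≤ |(j:ℝ) - (i:ℝ)| := by
    have : ((j:ℤ) - (i:ℤ)) ≠ 0 := by
      intro hc; apply h; omega
    have h2 := Int.one_le_abs this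
    have : ((1:ℤ):ℝ) ≤ ((|(j:ℤ) - (i:ℤ)|:ℤ):ℝ) := by exact_mod_cast h2
    rw [Int.cast_abs] at this
    push_cast at this ⊢
    linarith
  simp only [Real.dist_eq, sub_zero]
  calc (bump.rOut : ℝ) = 1/2 := rfl
  _ ≤ 1 := by norm_num
  _ ≤ _ := h1

lemma exists_interp (x : Fin (N+1) → E d) :
    ∃ X : ℝ → E d, ContDiff ℝ 2 X ∧ ∀ i : Fin (N+1), X ((i : ℕ) : ℝ) = x i := by
  refine ⟨fun t => ∑ i : Fin (N+1), bump (t - (i:ℕ)) • x i, ?_, ?_⟩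
  · apply ContDiff.sum
    intro i _
    exact ((bump.contDiff (n := 2)).comp
      (contDiff_id.sub contDiff_const)).smul contDiff_const
  · intro j
    show ∑ i : Fin (N+1), bump (((j:ℕ):ℝ) - (i:ℕ)) • x i = x j
    rw [Finset.sum_eq_single j]
    · simp [bump_self]
    · intro i _ hij
      rw [bump_ne (fun hc => hij (by exact Fin.ext hc)), zero_smul]
    · intro h; exact absurd (Finset.mem_univ j) h

lemma S_nonempty (x : Fin (N+1) → E d) : (S N x).Nonempty := by
  obtain ⟨X, hX, hXi⟩ := exists_interp x
  exact ⟨cost N X, cost_mem hX hXi⟩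

lemma S_bddBelow (x : Fin (N+1) → E d) : BddBelow (S N x) :=
  ⟨0, fun y hy => S_nonneg y hy⟩

end MCost

open MeasureTheory Matrix
noncomputable section
namespace MCost
variable {d N : ℕ}

def Cf (N : ℕ) (x : Fin (N+1) → E d) : ℝ := sInf (S N x)

lemma Cf_nonneg (x : Fin (N+1) → E d) : 0 ≤ Cf N x :=
  Real.sInf_nonneg (fun y hy => S_nonneg y hy)

lemma Cf_le {x : Fin (N+1) → E d} {X : ℝ → E d} (hX : ContDiff ℝ 2 X)
    (hXi : ∀ i : Fin (N+1), X ((i : ℕ) : ℝ) = x i) : Cf N x ≤ cost N X :=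
  csInf_le (S_bddBelow x) (cost_mem hX hXi)

lemma Cf_approx (x : Fin (N+1) → E d) {ε : ℝ} (hε : 0 < ε) :
    ∃ X : ℝ → E d, ContDiff ℝ 2 X ∧ (∀ i : Fin (N+1), X ((i : ℕ) : ℝ) = x i) ∧
      cost N X < Cf N x + ε := by
  obtain ⟨y, hy, hlt⟩ := exists_lt_of_csInf_lt (S_nonempty x) (lt_add_of_pos_right (Cf N x) hε)
  obtain ⟨X, hX, hXi, rfl⟩ := hy
  exact ⟨X, hX, hXi, hlt⟩

lemma Cf_zero : Cf N (0 : Fin (N+1) → E d) = 0 := by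
  have h0 : ContDiff ℝ 2 (fun _ : ℝ => (0 : E d)) := contDiff_const
  have hc : cost N (fun _ : ℝ => (0 : E d)) = 0 := by
    unfold cost
    have : deriv (fun _ : ℝ => (0 : E d)) = fun _ => 0 := by
      funext t; exact deriv_const t 0
    rw [this]
    simp [deriv_const]
  have h1 : Cf N 0 ≤ 0 := hc ▸ Cf_le h0 (fun i => rfl)
  exact le_antisymm h1 (Cf_nonneg 0)

lemma Cf_parallelogram (x y : Fin (N+1) → E d) :
    Cf N (x + y) + Cf N (x - y) = 2 * Cf N x + 2 * Cf N y := by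
  apply le_antisymm
  · apply le_of_forall_pos_le_add
    intro ε hε
    obtain ⟨X, hX, hXi, hXc⟩ := Cf_approx x (show 0 < ε/4 by linarith)
    obtain ⟨Y, hY, hYi, hYc⟩ := Cf_approx y (show 0 < ε/4 by linarith)
    have h1 : Cf N (x + y) ≤ cost N (fun s => X s + Y s) :=
      Cf_le (hX.add hY) (fun i => by simp [hXi i, hYi i])
    have h2 : Cf N (x - y) ≤ cost N (fun s => X s + (-1:ℝ) • Y s) :=
      Cf_le (hX.add (hY.const_smul _)) (fun i => by
        simp [hXi i, hYi i, sub_eq_add_neg])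
    have := cost_parallelogram (N := N) hX hY
    linarith
  · apply le_of_forall_pos_le_add
    intro ε hε
    obtain ⟨U, hU, hUi, hUc⟩ := Cf_approx (x + y) (show 0 < ε/2 by linarith)
    obtain ⟨V, hV, hVi, hVc⟩ := Cf_approx (x - y) (show 0 < ε/2 by linarith)
    set W : ℝ → E d := fun s => U s + V s with hW
    set Z : ℝ → E d := fun s => U s + (-1:ℝ) • V s with hZ
    have hWc : ContDiff ℝ 2 W := hU.add hV
    have hZc : ContDiff ℝ 2 Z := hU.add (hV.const_smul _)
    have h1 : Cf N x ≤ cost N (fun s => (1/2 : ℝ) • W s) := by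
      apply Cf_le (hWc.const_smul _)
      intro i
      have := hUi i; have := hVi i
      show (1/2 : ℝ) • (U ((i:ℕ):ℝ) + V ((i:ℕ):ℝ)) = x i
      rw [hUi i, hVi i]
      simp only [Pi.add_apply, Pi.sub_apply]
      rw [smul_add]
      module
    have h2 : Cf N y ≤ cost N (fun s => (1/2 : ℝ) • Z s) := by
      apply Cf_le (hZc.const_smul _)
      intro i
      show (1/2 : ℝ) • (U ((i:ℕ):ℝ) + (-1:ℝ) • V ((i:ℕ):ℝ)) = y i
      rw [hUi i, hVi i]
      simp only [Pi.add_apply, Pi.sub_apply]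
      module
    have e1 : cost N (fun s => (1/2 : ℝ) • W s) = (1/2:ℝ)^2 * cost N W := cost_smul hWc _
    have e2 : cost N (fun s => (1/2 : ℝ) • Z s) = (1/2:ℝ)^2 * cost N Z := cost_smul hZc _
    have e3 := cost_parallelogram (N := N) hU hV
    rw [e1] at h1; rw [e2] at h2
    have : cost N W + cost N Z = 2 * cost N U + 2 * cost N V := e3
    nlinarith [cost_nonneg (N := N) (X := U), cost_nonneg (N := N) (X := V)]

lemma Cf_smul_le (a : ℝ) (x : Fin (N+1) → E d) : Cf N (a • x) ≤ a^2 * Cf N x := by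
  rcases eq_or_ne a 0 with rfl | ha
  · simp [Cf_zero, Cf_nonneg]
  apply le_of_forall_pos_le_add
  intro ε hε
  obtain ⟨X, hX, hXi, hXc⟩ := Cf_approx x (show 0 < ε / a^2 by positivity)
  have h1 : Cf N (a • x) ≤ cost N (fun s => a • X s) :=
    Cf_le (hX.const_smul _) (fun i => by simp [hXi i])
  rw [cost_smul hX] at h1
  have ha2 : (0:ℝ) < a^2 := by positivity
  calc Cf N (a • x) ≤ a^2 * cost N X := h1
  _ ≤ a^2 * (Cf N x + ε / a^2) := by nlinarith
  _ = a^2 * Cf N x + ε := by field_simp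
  
lemma Cf_smul (a : ℝ) (x : Fin (N+1) → E d) : Cf N (a • x) = a^2 * Cf N x := by
  rcases eq_or_ne a 0 with rfl | ha
  · simp [Cf_zero]
  apply le_antisymm (Cf_smul_le a x)
  have h := Cf_smul_le a⁻¹ (a • x)
  rw [inv_smul_smul₀ ha] at h
  have ha2 : (0:ℝ) < a^2 := by positivity
  have : (a⁻¹)^2 = (a^2)⁻¹ := by field_simp
  rw [this] at h
  calc a^2 * Cf N x ≤ a^2 * ((a^2)⁻¹ * Cf N (a • x)) := by nlinarith
  _ = Cf N (a • x) := by field_simp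

end MCost

noncomputable section
namespace JvN

variable {V : Type*} [AddCommGroup V] [Module ℝ V]

variable (C : V → ℝ)

def B (x y : V) : ℝ := (C (x + y) - C (x - y)) / 4

section

variable (hpar : ∀ x y : V, C (x + y) + C (x - y) = 2 * C x + 2 * C y)
  (hsmul : ∀ (a : ℝ) (x : V), C (a • x) = a ^ 2 * C x)
  (hnn : ∀ x : V, 0 ≤ C x)

include hsmul

lemma C_zero : C 0 = 0 := by
  have := hsmul 0 0
  simpa using this

lemma C_neg (x : V) : C (-x) = C x := by
  have := hsmul (-1) x
  simpa using this

lemma B_symm (x y : V) : B C x y = B C y x := by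
  unfold B
  rw [add_comm y x, show x - y = -(y - x) by abel, C_neg C hsmul]

lemma B_self (x : V) : B C x x = C x := by
  unfold B
  rw [show x + x = (2:ℝ) • x by module, show x - x = (0:ℝ) • x by module,
    hsmul, hsmul]
  ring

lemma B_zero_left (y : V) : B C 0 y = 0 := by
  unfold B
  rw [zero_add, show (0:V) - y = -y by abel, C_neg C hsmul]
  ring

include hpar

lemma C_avg (u v : V) : C u + C v = (C (u + v) + C (u - v)) / 2 := by
  have h := hpar ((1/2 : ℝ) • (u + v)) ((1/2 : ℝ) • (u - v))
  rw [show (1/2 : ℝ) • (u + v) + (1/2 : ℝ) • (u - v) = u by module,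
    show (1/2 : ℝ) • (u + v) - (1/2 : ℝ) • (u - v) = v by module,
    hsmul, hsmul] at h
  linarith

lemma B_key (x y z : V) : B C x z + B C y z = B C (x + y) ((2:ℝ) • z) / 2 := by
  unfold B
  have h1 := C_avg C hpar hsmul (x + z) (y + z)
  have h2 := C_avg C hpar hsmul (x - z) (y - z)
  rw [show x + z + (y + z) = x + y + (2:ℝ) • z by module,
    show x + z - (y + z) = x - y by module] at h1
  rw [show x - z + (y - z) = x + y - (2:ℝ) • z by module,
    show x - z - (y - z) = x - y by module] at h2
  linarith

lemma B_add_left (x y z : V) : B C (x + y) z = B C x z + B C y z := by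
  have h := B_key C hpar hsmul x y z
  have h0 := B_key C hpar hsmul (x + y) 0 z
  rw [B_zero_left C hsmul, add_zero, add_zero] at h0
  linarith

lemma B_neg_left (x y : V) : B C (-x) y = - B C x y := by
  have := B_add_left C hpar hsmul x (-x) y
  rw [show x + -x = (0:V) by abel, B_zero_left C hsmul] at this
  linarith

lemma B_nsmul_left (n : ℕ) (x y : V) : B C ((n : ℝ) • x) y = n * B C x y := by
  induction n with
  | zero => simpa using B_zero_left C hsmul y
  | succ n ih =>
    rw [show ((n + 1 : ℕ) : ℝ) • x = (n:ℝ) • x + x by push_cast; module,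
      B_add_left C hpar hsmul, ih]
    push_cast; ring

include hnn

lemma B_bound (x y : V) : |B C x y| ≤ (C x + C y) / 2 := by
  have h := hpar x y
  have h1 := hnn (x + y)
  have h2 := hnn (x - y)
  rw [abs_le]
  constructor <;> (unfold B; nlinarith)

lemma B_small_pos {s : ℝ} (x y : V) (hspos : 0 < s) (hs1 : s ≤ 1) :
    |B C (s • x) y| ≤ s * (C x + C y) := by
  set n := ⌈1/s⌉₊ with hn
  have hn1 : (1:ℝ)/s ≤ n := Nat.le_ceil _
  have hn2 : (n:ℝ) < 1/s + 1 := Nat.ceil_lt_add_one (by positivity)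
  have npos : (0:ℝ) < n := lt_of_lt_of_le (by positivity) hn1
  have hkey : (n:ℝ) * B C (s • x) y = B C ((n * s : ℝ) • x) y := by
    rw [show (n * s : ℝ) • x = (n:ℝ) • (s • x) by module,
      B_nsmul_left C hpar hsmul]
  have hb := B_bound C hpar hsmul hnn ((n * s : ℝ) • x) y
  rw [hsmul] at hb
  set P : ℝ := (n:ℝ) * s with hP
  have hPpos : 0 < P := by positivity
  have hle2 : P ≤ 2 := by
    have := mul_le_mul_of_nonneg_right (le_of_lt hn2) (le_of_lt hspos)
    have h12 : (1/s + 1) * s = 1 + s := by field_simp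
    rw [hP]; nlinarith
  have hns1 : (1:ℝ) ≤ P := by
    have := mul_le_mul_of_nonneg_right hn1 (le_of_lt hspos)
    have h11 : (1/s) * s = 1 := by field_simp
    rw [hP]; nlinarith
  have hCx := hnn x; have hCy := hnn y
  have e1 : P^2 * C x ≤ 2 * (P * C x) := by nlinarith [mul_nonneg (sub_nonneg.2 hle2) (mul_nonneg hPpos.le hCx)]
  have e2 : C y ≤ P * C y := by nlinarith
  have habs : |B C (s • x) y| = |B C (P • x) y| / n := by
    rw [← hkey, abs_mul, abs_of_pos npos]
    field_simp
  rw [habs, div_le_iff₀ npos]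
  have hPy : 0 ≤ P * C y := by positivity
  calc |B C (P • x) y| ≤ (P^2 * C x + C y)/2 := hb
  _ ≤ P * C x + P * C y := by linarith
  _ = s * (C x + C y) * n := by rw [hP]; ring

lemma B_small {t : ℝ} (x y : V) (ht : |t| ≤ 1) :
    |B C (t • x) y| ≤ |t| * (C x + C y) := by
  rcases lt_trichotomy t 0 with hneg | rfl | hpos
  · have he : B C (t • x) y = - B C ((-t) • x) y := by
      rw [show t • x = -((-t) • x) by module, B_neg_left C hpar hsmul]
    rw [he, abs_neg]
    rw [abs_of_neg hneg] at ht ⊢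
    exact B_small_pos C hpar hsmul hnn x y (by linarith) ht
  · simpa using B_zero_left C hsmul y
  · rw [abs_of_pos hpos] at ht ⊢
    exact B_small_pos C hpar hsmul hnn x y hpos ht

lemma B_smul_left (t : ℝ) (x y : V) : B C (t • x) y = t * B C x y := by
  set f : ℝ →+ ℝ := AddMonoidHom.mk' (fun t => B C (t • x) y) (by
    intro s u
    show B C ((s + u) • x) y = B C (s • x) y + B C (u • x) y
    rw [show (s + u) • x = s • x + u • x by module, B_add_left C hpar hsmul]) with hf
  have hft : ∀ a : ℝ, f a = B C (a • x) y := fun a => rfl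
  have hcont : Continuous f := by
    rw [continuous_iff_continuousAt]
    intro s
    rw [Metric.continuousAt_iff]
    intro ε hε
    set K := C x + C y with hK
    have hK0 : 0 ≤ K := by have := hnn x; have := hnn y; positivity
    refine ⟨min 1 (ε / (K + 1)), by positivity, ?_⟩
    intro a ha
    have hd : |a - s| < min 1 (ε / (K + 1)) := by simpa [Real.dist_eq] using ha
    have hd1 : |a - s| ≤ 1 := le_of_lt (lt_of_lt_of_le hd (min_le_left _ _))
    have hd2 : |a - s| < ε / (K + 1) := lt_of_lt_of_le hd (min_le_right _ _)
    have hfd : f a - f s = B C ((a - s) • x) y := by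
      rw [← map_sub]; exact hft _
    rw [Real.dist_eq, hfd]
    calc |B C ((a - s) • x) y| ≤ |a - s| * K := B_small C hpar hsmul hnn x y hd1
    _ ≤ |a - s| * (K + 1) := by nlinarith [abs_nonneg (a - s)]
    _ < (ε / (K + 1)) * (K + 1) := by
        apply mul_lt_mul_of_pos_right hd2; linarith
    _ = ε := by field_simp
  have hL : f (t • (1:ℝ)) = t • f 1 := by
    simpa using (f.toRealLinearMap hcont).map_smul t 1
  rw [hft, hft] at hL
  simpa using hL

lemma B_smul_right (t : ℝ) (x y : V) : B C x (t • y) = t * B C x y := by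
  rw [B_symm C hsmul, B_smul_left C hpar hsmul hnn, B_symm C hsmul]

lemma B_add_right (x y z : V) : B C x (y + z) = B C x y + B C x z := by
  rw [B_symm C hsmul, B_add_left C hpar hsmul, B_symm C hsmul x y, B_symm C hsmul z x]

def Bform : V →ₗ[ℝ] V →ₗ[ℝ] ℝ :=
  LinearMap.mk₂ ℝ (B C) (B_add_left C hpar hsmul) (fun t x y => B_smul_left C hpar hsmul hnn t x y)
    (B_add_right C hpar hsmul hnn) (fun t x y => B_smul_right C hpar hsmul hnn t x y)

end
end JvN

open MeasureTheory Matrix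
noncomputable section
namespace MCost
variable {d N : ℕ}

def eb (a : Fin (N+1) × Fin d) : Fin (N+1) → E d :=
  Pi.single a.1 (EuclideanSpace.single a.2 (1:ℝ))

lemma decomp (x : Fin (N+1) → E d) :
    x = ∑ a : Fin (N+1) × Fin d, (x a.1 a.2) • eb a := by
  funext i
  rw [Finset.sum_apply]
  ext j
  have h1 : (∑ a : Fin (N+1) × Fin d, (x a.1 a.2 • eb a) i) j
      = ∑ a : Fin (N+1) × Fin d, ((x a.1 a.2 • eb a) i) j := by
    rw [WithLp.ofLp_sum, Finset.sum_apply]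
  rw [h1, Finset.sum_eq_single (i, j)]
  · simp [eb, EuclideanSpace.single_apply]
  · rintro ⟨a1, a2⟩ _ hab
    simp only [Pi.smul_apply, eb]
    rcases eq_or_ne a1 i with rfl | h1
    · have : a2 ≠ j := fun hc => hab (by simp [hc])
      simp [EuclideanSpace.single_apply, this, Ne.symm this]
    · simp [Pi.single_eq_of_ne' h1 _]
  · intro h; exact absurd (Finset.mem_univ _) h

end MCost

namespace MCost
variable {d N : ℕ}

lemma multiCost_eq_Cf : multiCost (d := d) N = Cf N := rfl

section main
variable (d N : ℕ)

def Bf : (Fin (N+1) → E d) →ₗ[ℝ] (Fin (N+1) → E d) →ₗ[ℝ] ℝ :=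
  JvN.Bform (Cf N) (Cf_parallelogram) (Cf_smul) (Cf_nonneg)

lemma Bf_self (x : Fin (N+1) → E d) : Bf d N x x = Cf N x :=
  JvN.B_self (Cf N) (Cf_smul) x

lemma Bf_symm (x y : Fin (N+1) → E d) : Bf d N x y = Bf d N y x :=
  JvN.B_symm (Cf N) (Cf_smul) x y

def Rmat : Matrix (Fin (N + 1) × Fin d) (Fin (N + 1) × Fin d) ℝ :=
  Matrix.of fun a b => Bf d N (eb a) (eb b)

lemma main_eq (x : Fin (N+1) → E d) :
    Cf N x = (fun a : Fin (N + 1) × Fin d => x a.1 a.2) ⬝ᵥ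
      (Rmat d N).mulVec (fun a : Fin (N + 1) × Fin d => x a.1 a.2) := by
  rw [← Bf_self]
  conv_lhs => rw [decomp x]
  simp only [map_sum, _root_.map_smul, LinearMap.sum_apply, LinearMap.smul_apply, smul_eq_mul]
  unfold dotProduct Matrix.mulVec dotProduct
  simp only [Rmat, Matrix.of_apply, Finset.mul_sum]
  rw [Finset.sum_comm]
  apply Finset.sum_congr rfl
  intro a _
  apply Finset.sum_congr rfl
  intro b _
  ring

lemma Rmat_posSemidef : (Rmat d N).PosSemidef := by
  rw [Matrix.posSemidef_iff_dotProduct_mulVec]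
  constructor
  · ext a b
    simp only [Matrix.conjTranspose_apply, Rmat, Matrix.of_apply, star_trivial]
    exact Bf_symm d N (eb b) (eb a)
  · intro v
    set xv : Fin (N+1) → E d := fun i => (WithLp.equiv 2 (Fin d → ℝ)).symm (fun j => v (i, j)) with hxv
    have hv : (fun a : Fin (N+1) × Fin d => xv a.1 a.2) = v := by funext a; rfl
    have h := main_eq d N xv
    rw [hv] at h
    have : star v = v := by
      funext a; simp
    rw [this, ← h]
    exact Cf_nonneg xv

lemma coord_cont (a : Fin (N+1) × Fin d) :
    Continuous fun x : Fin (N+1) → E d => x a.1 a.2 :=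
  (continuous_apply a.2).comp (by fun_prop : Continuous fun x : Fin (N+1) → E d => (x a.1).ofLp)

lemma Cf_continuous : Continuous (Cf (d := d) N) := by
  have h : Cf (d := d) N = fun x => (fun a : Fin (N + 1) × Fin d => x a.1 a.2) ⬝ᵥ
      (Rmat d N).mulVec (fun a : Fin (N + 1) × Fin d => x a.1 a.2) := funext (main_eq d N)
  rw [h]
  unfold dotProduct Matrix.mulVec dotProduct
  apply continuous_finset_sum
  intro a _
  apply Continuous.mul (coord_cont d N a)
  apply continuous_finset_sum
  intro b _
  exact Continuous.mul continuous_const (coord_cont d N b)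

end main
end MCost


/-- There is a symmetric PSD matrix `R` with `𝒞(x₀,…,x_N) = xᵀRx` for the concatenated
vector `x`; in particular `𝒞` is a continuous nonnegative quadratic form. -/
theorem stmt19 (d N : ℕ) (hd : 1 ≤ d) (hN : 1 ≤ N) :
    ∃ R : Matrix (Fin (N + 1) × Fin d) (Fin (N + 1) × Fin d) ℝ,
      R.PosSemidef ∧
      (∀ x : Fin (N + 1) → EuclideanSpace ℝ (Fin d),
        multiCost N x = (fun a : Fin (N + 1) × Fin d => x a.1 a.2) ⬝ᵥ
          R.mulVec (fun a : Fin (N + 1) × Fin d => x a.1 a.2)) ∧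
      Continuous (multiCost (d := d) N) ∧
      (∀ x : Fin (N + 1) → EuclideanSpace ℝ (Fin d), 0 ≤ multiCost N x) := by
  refine ⟨MCost.Rmat d N, MCost.Rmat_posSemidef d N, ?_, ?_, ?_⟩
  · intro x
    rw [MCost.multiCost_eq_Cf]
    exact MCost.main_eq d N x
  · rw [MCost.multiCost_eq_Cf]
    exact MCost.Cf_continuous d N
  · intro x
    rw [MCost.multiCost_eq_Cf]
    exact MCost.Cf_nonneg x
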